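/- (Dictated independence for OLF) Let S and S' be two OLF systems on the same odd number n of actors with the same vertex set, and let i be an actor having exactly one predecessor in both systems, i.e., |P_G(i)| = |P_{G'}(i)| = 1. Then SAT_S(i) = SAT_{S'}(i). -/
import Mathlib


open Finset

/-- The set of predecessors of `i` in the digraph with edge set `E`. -/
def preds {n : ℕ} (E : Finset (Fin n × Fin n)) (i : Fin n) : Finset (Fin n) :=
  Finset.univ.filter (fun j => (j, i) ∈ E)

/-- The set of successors of `i` in the digraph with edge set `E`. -/
def succs {n : ℕ} (E : Finset (Fin n × Fin n)) (i : Fin n) : Finset (Fin n) :=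
  Finset.univ.filter (fun j => (i, j) ∈ E)

/-- `E` is the edge set of an OLF system: every edge runs from a vertex with no
predecessors (an opinion leader) to a vertex with no successors (a follower). -/
def IsOLF {n : ℕ} (E : Finset (Fin n × Fin n)) : Prop :=
  ∀ e ∈ E, preds E e.1 = ∅ ∧ succs E e.2 = ∅

/-- One step of the unanimity rule: actor `i` adopts the common decision of its
predecessors (as recorded in `c`) if they are nonempty and unanimous, and keeps
its own initial decision `x i` otherwise. -/
def unanStep {n : ℕ} (E : Finset (Fin n × Fin n)) (x c : Fin n → Bool) (i : Fin n) : Bool :=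
  if (preds E i).Nonempty ∧ ∀ j ∈ preds E i, c j = true then true
  else if (preds E i).Nonempty ∧ ∀ j ∈ preds E i, c j = false then false
  else x i

/-- The collective decision vector of an OLF system. -/
def olfVec {n : ℕ} (E : Finset (Fin n × Fin n)) (x : Fin n → Bool) : Fin n → Bool :=
  unanStep E x x

/-- Simple majority over a decision vector. -/
def majority {n : ℕ} (c : Fin n → Bool) : Bool :=
  decide ((Finset.univ.filter (fun i => c i = true)).card >
          (Finset.univ.filter (fun i => c i = false)).card)

/-- The collective decision function of an OLF system. -/
def olfC {n : ℕ} (E : Finset (Fin n × Fin n)) (x : Fin n → Bool) : Bool :=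
  majority (olfVec E x)

/-- The satisfaction score of actor `i` under a collective decision making model `C`. -/
def SAT {n : ℕ} (C : (Fin n → Bool) → Bool) (i : Fin n) : ℕ :=
  (Finset.univ.filter (fun x : Fin n → Bool => C x = x i)).card

lemma olfVec_update {n : ℕ} (E : Finset (Fin n × Fin n)) (hE : IsOLF E)
    (i : Fin n) (hP : (preds E i).card = 1) (x : Fin n → Bool) (b : Bool) :
    olfVec E (Function.update x i b) = olfVec E x := by
  obtain ⟨j, hj⟩ := Finset.card_eq_one.mp hP
  have hjmem : j ∈ preds E i := by simp [hj]
  have hjE : (j, i) ∈ E := by simpa [preds] using hjmem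
  have hsucc : succs E i = ∅ := (hE _ hjE).2
  have hji : j ≠ i := by
    rintro rfl
    have h0 := (hE _ hjE).1
    rw [h0] at hjmem
    exact absurd hjmem (Finset.notMem_empty _)
  funext k
  by_cases hk : k = i
  · subst hk
    simp only [olfVec, unanStep, hj, Finset.mem_singleton, forall_eq,
      Finset.singleton_nonempty, true_and, Function.update_of_ne hji]
    cases x j <;> simp
  · have hiP : i ∉ preds E k := by
      intro h
      have hE2 : (i, k) ∈ E := by simpa [preds] using h
      have : k ∈ succs E i := by simpa [succs] using hE2
      rw [hsucc] at this
      exact absurd this (Finset.notMem_empty _)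
    have hx' : ∀ j' ∈ preds E k, Function.update x i b j' = x j' := by
      intro j' hj'
      have hne : j' ≠ i := fun h => hiP (h ▸ hj')
      exact Function.update_of_ne hne b x
    have h1 : (∀ j' ∈ preds E k, Function.update x i b j' = true) ↔
        (∀ j' ∈ preds E k, x j' = true) :=
      forall₂_congr (fun j' hj' => by rw [hx' j' hj'])
    have h2 : (∀ j' ∈ preds E k, Function.update x i b j' = false) ↔
        (∀ j' ∈ preds E k, x j' = false) :=
      forall₂_congr (fun j' hj' => by rw [hx' j' hj'])
    simp only [olfVec, unanStep, h1, h2, Function.update_of_ne hk]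

lemma sat_indep {n : ℕ} (hn : 0 < n) (C : (Fin n → Bool) → Bool) (i : Fin n)
    (hC : ∀ x b, C (Function.update x i b) = C x) :
    SAT C i = 2 ^ (n - 1) := by
  classical
  unfold SAT
  set f : (Fin n → Bool) → (Fin n → Bool) := fun x => Function.update x i (!(x i)) with hfdef
  have hfi : ∀ x, f x i = !(x i) := by intro x; simp [hfdef]
  have hff : ∀ x, f (f x) = x := by
    intro x
    funext k
    by_cases hk : k = i
    · subst hk; simp [hfdef]
    · simp [hfdef, Function.update_of_ne hk]
  have hCf : ∀ x, C (f x) = C x := fun x => hC x _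
  have hinj : Function.Injective f := Function.LeftInverse.injective hff
  set A := Finset.univ.filter (fun x : Fin n → Bool => C x = x i) with hA
  set B := Finset.univ.filter (fun x : Fin n → Bool => ¬ C x = x i) with hB
  have hsum : A.card + B.card = 2 ^ n := by
    rw [hA, hB, Finset.card_filter_add_card_filter_not]
    simp [Fintype.card_fun]
  have himg : B = A.image f := by
    ext y
    rw [hA, hB]
    simp only [Finset.mem_image, Finset.mem_filter, Finset.mem_univ, true_and]
    constructor
    · intro hy
      refine ⟨f y, ?_, hff y⟩
      rw [hCf, hfi]
      cases h : y i <;> rw [h] at hy <;> simp_all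
    · rintro ⟨x, hx, rfl⟩
      rw [hCf, hfi, hx]
      cases x i <;> simp
  have hcard : A.card = B.card := by
    rw [himg, Finset.card_image_of_injective _ hinj]
  have h2 : 2 * A.card = 2 ^ n := by omega
  have hpow : 2 ^ n = 2 * 2 ^ (n - 1) := by
    conv_lhs => rw [show n = (n - 1) + 1 by omega]
    ring
  omega

/-- Dictated independence for OLF systems: an actor having exactly one
predecessor in each of two OLF systems on the same vertex set has the same
satisfaction score in both. -/
theorem olf_dictated_independence (n : ℕ) (hn : Odd n)
    (E E' : Finset (Fin n × Fin n)) (hE : IsOLF E) (hE' : IsOLF E')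
    (i : Fin n) (hP : (preds E i).card = 1) (hP' : (preds E' i).card = 1) :
    SAT (olfC E) i = SAT (olfC E') i := by
  have hn0 : 0 < n := Nat.pos_of_ne_zero (by rintro rfl; simp at hn)
  rw [sat_indep hn0 (olfC E) i
      (fun x b => by unfold olfC; rw [olfVec_update E hE i hP x b]),
    sat_indep hn0 (olfC E') i
      (fun x b => by unfold olfC; rw [olfVec_update E' hE' i hP' x b])]
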